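/- Let k be a field of characteristic p ≠ 2, n ≥ 4, V a 2n-dimensional k-vector space with basis v_1,...,v_{2n}, and l an integer with (n+1)/2 < l ≤ n. Let e = E_{2l-n-1,2n} + E_{n,2l-1} + Σ_{i=1}^{n-1} (E_{i,i+1} + E_{n+i+1,n+i}). Then e is nilpotent with exactly two Jordan blocks on V, of sizes 2l - 1 and 2n - 2l + 1. -/

import Mathlib

open Matrix Finset

set_option linter.unusedSectionVars false
set_option maxHeartbeats 1000000

section Aux
variable {k : Type*} [Field k]

private lemma sum_mul_ite_nat {N : ℕ} (f : Fin N → k) (a : ℕ) (C : Prop) [Decidable C] (q : k) :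
    (∑ t : Fin N, f t * if t.1 = a ∧ C then q else 0) =
      if h : a < N ∧ C then f ⟨a, h.1⟩ * q else 0 := by
  split_ifs with h
  · rw [Finset.sum_eq_single (⟨a, h.1⟩ : Fin N)]
    · rw [if_pos ⟨rfl, h.2⟩]
    · intro t _ ht
      rw [if_neg, mul_zero]
      rintro ⟨h1, -⟩; exact ht (Fin.ext h1)
    · simp
  · refine Finset.sum_eq_zero fun t _ => ?_
    rw [if_neg, mul_zero]
    rintro ⟨h1, h2⟩; exact h ⟨h1 ▸ t.2, h2⟩

/-- `m`-th power of the Jordan form with nilpotent blocks of sizes `2l-1` and `2n-2l+1`. -/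
private def JmM (k : Type*) [Field k] (n l m : ℕ) : Matrix (Fin (2*n)) (Fin (2*n)) k :=
  fun i j =>
    if i.1 = j.1 + m ∧ (j.1 + m < 2*l - 1 ∨ (2*l - 1 ≤ j.1 ∧ j.1 + m < 2*n)) then 1 else 0

/-- base-change matrix whose columns are the Jordan chains of `e`. -/
private def PM (k : Type*) [Field k] (n l : ℕ) : Matrix (Fin (2*n)) (Fin (2*n)) k :=
  fun i c =>
    (if i.1 = n + c.1 ∧ c.1 < n then 1 else 0) +
    (if i.1 = 2*l - 2 - c.1 ∧ (2*l - 1 - n ≤ c.1 ∧ c.1 < n) then 1 else 0) +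
    (if i.1 = 2*l - 2 - c.1 ∧ (n ≤ c.1 ∧ c.1 < 2*l - 1) then 2 else 0) +
    (if i.1 = c.1 ∧ 2*l - 1 ≤ c.1 then 1 else 0) +
    (if i.1 = n + 2*l - 2 - c.1 ∧ 2*l - 1 ≤ c.1 then -1 else 0)

/-- inverse of `PM`. -/
private def QM (k : Type*) [Field k] (n l : ℕ) : Matrix (Fin (2*n)) (Fin (2*n)) k :=
  fun c j =>
    (if c.1 = 2*l - 2 - j.1 ∧ j.1 < n then (2:k)⁻¹ else 0) +
    (if c.1 = n + 2*l - 2 - j.1 ∧ (2*l - 1 - n ≤ j.1 ∧ j.1 < n) then -(2:k)⁻¹ else 0) +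
    (if c.1 = j.1 - n ∧ (n ≤ j.1 ∧ j.1 < 2*l - 1) then 1 else 0) +
    (if c.1 = j.1 - n ∧ 2*l - 1 ≤ j.1 then (2:k)⁻¹ else 0) +
    (if c.1 = j.1 ∧ 2*l - 1 ≤ j.1 then (2:k)⁻¹ else 0)

/-- functional form of the matrix `e`. -/
private def EM (k : Type*) [Field k] (n l : ℕ) : Matrix (Fin (2*n)) (Fin (2*n)) k :=
  fun a b =>
    (if b.1 = a.1 + 1 ∧ a.1 + 1 < n then 1 else 0) +
    (if a.1 = b.1 + 1 ∧ (n ≤ b.1 ∧ b.1 + 1 < 2*n) then 1 else 0) +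
    (if a.1 = n - 1 ∧ b.1 = 2*l - 2 then 1 else 0) +
    (if a.1 = 2*l - n - 2 ∧ b.1 = 2*n - 1 then 1 else 0)

/-- diagonal pattern of `JmMᵀ * JmM`. -/
private def DM (k : Type*) [Field k] (n l m : ℕ) : Fin (2*n) → k :=
  fun j => if j.1 + m < 2*l - 1 ∨ (2*l - 1 ≤ j.1 ∧ j.1 + m < 2*n) then 1 else 0

variable (n l : ℕ) (hn : 4 ≤ n) (hl1 : n + 1 < 2*l) (hl2 : l ≤ n)

include hn hl1 hl2

private lemma JmM_zero : JmM k n l 0 = 1 := by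
  ext i j
  have hi := i.2; have hj := j.2
  have hij : (i = j) ↔ (i.1 = j.1) := Fin.ext_iff
  simp only [JmM, one_apply, hij]
  split_ifs with h1 h2 h2 <;> first | rfl | (exfalso; omega)

private lemma JmM_mul (m : ℕ) : JmM k n l m * JmM k n l 1 = JmM k n l (m+1) := by
  ext i j
  rw [mul_apply]
  simp only [JmM]
  rw [show (∑ t : Fin (2*n), (if i.1 = t.1 + m ∧ (t.1 + m < 2*l - 1 ∨ (2*l - 1 ≤ t.1 ∧ t.1 + m < 2*n)) then (1:k) else 0) *
        if t.1 = j.1 + 1 ∧ (j.1 + 1 < 2*l - 1 ∨ (2*l - 1 ≤ j.1 ∧ j.1 + 1 < 2*n)) then (1:k) else 0) =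
      ∑ t : Fin (2*n), (fun s : Fin (2*n) => if i.1 = s.1 + m ∧ (s.1 + m < 2*l - 1 ∨ (2*l - 1 ≤ s.1 ∧ s.1 + m < 2*n)) then (1:k) else 0) t *
        if t.1 = j.1 + 1 ∧ (j.1 + 1 < 2*l - 1 ∨ (2*l - 1 ≤ j.1 ∧ j.1 + 1 < 2*n)) then (1:k) else 0 from rfl,
    sum_mul_ite_nat]
  have := i.2; have := j.2
  split_ifs
  all_goals (try simp only [Fin.val_mk] at *)
  all_goals first | ring1 | (exfalso; omega)

private lemma JmM_top : JmM k n l (2*l-1) = 0 := by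
  ext i j
  have hj := j.2
  simp only [JmM, Matrix.zero_apply]
  rw [if_neg]
  omega

private lemma count_aux (m : ℕ) :
    ((Finset.range (2*n)).filter fun j => j + m < 2*l - 1 ∨ (2*l - 1 ≤ j ∧ j + m < 2*n)).card
      = (2*l - 1 - m) + (2*n - 2*l + 1 - m) := by
  rw [show ((Finset.range (2*n)).filter fun j => j + m < 2*l - 1 ∨ (2*l - 1 ≤ j ∧ j + m < 2*n))
      = Finset.range (2*l - 1 - m) ∪ Finset.Ico (2*l - 1) (2*n - m) from by
    ext x
    simp only [Finset.mem_filter, Finset.mem_range, Finset.mem_union, Finset.mem_Ico]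
    omega]
  rw [Finset.card_union_of_disjoint (by
    simp only [Finset.disjoint_left, Finset.mem_range, Finset.mem_Ico]
    omega)]
  rw [Finset.card_range, Nat.card_Ico]
  omega



private lemma rank_JmM (m : ℕ) :
    (JmM k n l m).rank = (2*l - 1 - m) + (2*n - 2*l + 1 - m) := by
  classical
  have h1 : JmM k n l m * diagonal (DM k n l m) = JmM k n l m := by
    ext i j
    rw [mul_diagonal]
    simp only [JmM, DM]
    split_ifs
    all_goals first | ring1 | (exfalso; omega)
  have h2 : (JmM k n l m)ᵀ * JmM k n l m = diagonal (DM k n l m) := by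
    ext c j
    rw [mul_apply, diagonal_apply]
    simp only [transpose_apply, JmM, sum_mul_ite_nat]
    simp only [DM, Fin.val_mk, Fin.ext_iff]
    split_ifs
    all_goals first | ring1 | (exfalso; omega)
  have hle1 : (JmM k n l m).rank ≤ (diagonal (DM k n l m)).rank := by
    conv_lhs => rw [← h1]
    exact rank_mul_le_right _ _
  have hle2 : (diagonal (DM k n l m)).rank ≤ (JmM k n l m).rank := by
    rw [← h2]
    exact rank_mul_le_right _ _
  rw [le_antisymm hle1 hle2, rank_diagonal]
  have hiff : ∀ j : Fin (2*n), DM k n l m j ≠ 0 ↔ ((j:ℕ) + m < 2*l - 1 ∨ (2*l - 1 ≤ (j:ℕ) ∧ (j:ℕ) + m < 2*n)) := by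
    intro j
    rw [show DM k n l m j = if (j:ℕ) + m < 2*l - 1 ∨ (2*l - 1 ≤ (j:ℕ) ∧ (j:ℕ) + m < 2*n) then (1:k) else 0 from rfl]
    by_cases h : (j:ℕ) + m < 2*l - 1 ∨ (2*l - 1 ≤ (j:ℕ) ∧ (j:ℕ) + m < 2*n)
    · rw [if_pos h]; exact iff_of_true one_ne_zero h
    · rw [if_neg h]; exact iff_of_false (by simp) h
  calc Fintype.card {j // DM k n l m j ≠ 0}
      = Fintype.card {j : Fin (2*n) // (j:ℕ) + m < 2*l - 1 ∨ (2*l - 1 ≤ (j:ℕ) ∧ (j:ℕ) + m < 2*n)} :=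
        Fintype.card_congr (Equiv.subtypeEquivRight hiff)
    _ = ((Finset.range (2*n)).filter fun j => j + m < 2*l - 1 ∨ (2*l - 1 ≤ j ∧ j + m < 2*n)).card := by
        rw [Fintype.card_subtype, Finset.card_filter, Finset.card_filter,
          Fin.sum_univ_eq_sum_range (fun t => if t + m < 2*l - 1 ∨ (2*l - 1 ≤ t ∧ t + m < 2*n) then 1 else 0)]
    _ = (2*l - 1 - m) + (2*n - 2*l + 1 - m) := count_aux n l hn hl1 hl2 m


private lemma PQ (h2 : (2:k) ≠ 0) : PM k n l * QM k n l = 1 := by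
  ext i j
  rw [mul_apply, one_apply]
  simp only [QM, mul_add, Finset.sum_add_distrib, sum_mul_ite_nat]
  have hi := i.2; have hj := j.2
  by_cases hA : (j:ℕ) < 2*l - 1 - n
  · rw [dif_pos (show 2*l - 2 - (j:ℕ) < 2*n ∧ (j:ℕ) < n by omega),
      dif_neg (show ¬(n + 2*l - 2 - (j:ℕ) < 2*n ∧ (2*l - 1 - n ≤ (j:ℕ) ∧ (j:ℕ) < n)) by omega),
      dif_neg (show ¬((j:ℕ) - n < 2*n ∧ (n ≤ (j:ℕ) ∧ (j:ℕ) < 2*l - 1)) by omega),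
      dif_neg (show ¬((j:ℕ) - n < 2*n ∧ 2*l - 1 ≤ (j:ℕ)) by omega),
      dif_neg (show ¬((j:ℕ) < 2*n ∧ 2*l - 1 ≤ (j:ℕ)) by omega)]
    simp only [PM, Fin.val_mk]
    simp only [(show ¬((i:ℕ) = n + (2*l - 2 - (j:ℕ)) ∧ 2*l - 2 - (j:ℕ) < n) by omega),
      (show ¬((i:ℕ) = 2*l - 2 - (2*l - 2 - (j:ℕ)) ∧ (2*l - 1 - n ≤ 2*l - 2 - (j:ℕ) ∧ 2*l - 2 - (j:ℕ) < n)) by omega),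
      (show ((i:ℕ) = 2*l - 2 - (2*l - 2 - (j:ℕ)) ∧ (n ≤ 2*l - 2 - (j:ℕ) ∧ 2*l - 2 - (j:ℕ) < 2*l - 1)) ↔ ((i:ℕ) = (j:ℕ)) by omega),
      (show ¬((i:ℕ) = 2*l - 2 - (j:ℕ) ∧ 2*l - 1 ≤ 2*l - 2 - (j:ℕ)) by omega),
      (show ¬((i:ℕ) = n + 2*l - 2 - (2*l - 2 - (j:ℕ)) ∧ 2*l - 1 ≤ 2*l - 2 - (j:ℕ)) by omega), Fin.ext_iff, if_false, add_zero, zero_add]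
    try split_ifs
    all_goals first | (exfalso; omega) | ring1 | (norm_num; done) | linear_combination (mul_inv_cancel₀ h2 : (2:k) * 2⁻¹ = 1)
  by_cases hB : (j:ℕ) < n
  · rw [dif_pos (show 2*l - 2 - (j:ℕ) < 2*n ∧ (j:ℕ) < n by omega),
      dif_pos (show n + 2*l - 2 - (j:ℕ) < 2*n ∧ (2*l - 1 - n ≤ (j:ℕ) ∧ (j:ℕ) < n) by omega),
      dif_neg (show ¬((j:ℕ) - n < 2*n ∧ (n ≤ (j:ℕ) ∧ (j:ℕ) < 2*l - 1)) by omega),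
      dif_neg (show ¬((j:ℕ) - n < 2*n ∧ 2*l - 1 ≤ (j:ℕ)) by omega),
      dif_neg (show ¬((j:ℕ) < 2*n ∧ 2*l - 1 ≤ (j:ℕ)) by omega)]
    simp only [PM, Fin.val_mk]
    simp only [(show ((i:ℕ) = n + (2*l - 2 - (j:ℕ)) ∧ 2*l - 2 - (j:ℕ) < n) ↔ ((i:ℕ) = n + 2*l - 2 - (j:ℕ)) by omega),
      (show ((i:ℕ) = 2*l - 2 - (2*l - 2 - (j:ℕ)) ∧ (2*l - 1 - n ≤ 2*l - 2 - (j:ℕ) ∧ 2*l - 2 - (j:ℕ) < n)) ↔ ((i:ℕ) = (j:ℕ)) by omega),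
      (show ¬((i:ℕ) = 2*l - 2 - (2*l - 2 - (j:ℕ)) ∧ (n ≤ 2*l - 2 - (j:ℕ) ∧ 2*l - 2 - (j:ℕ) < 2*l - 1)) by omega),
      (show ¬((i:ℕ) = 2*l - 2 - (j:ℕ) ∧ 2*l - 1 ≤ 2*l - 2 - (j:ℕ)) by omega),
      (show ¬((i:ℕ) = n + 2*l - 2 - (2*l - 2 - (j:ℕ)) ∧ 2*l - 1 ≤ 2*l - 2 - (j:ℕ)) by omega),
      (show ¬((i:ℕ) = n + (n + 2*l - 2 - (j:ℕ)) ∧ n + 2*l - 2 - (j:ℕ) < n) by omega),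
      (show ¬((i:ℕ) = 2*l - 2 - (n + 2*l - 2 - (j:ℕ)) ∧ (2*l - 1 - n ≤ n + 2*l - 2 - (j:ℕ) ∧ n + 2*l - 2 - (j:ℕ) < n)) by omega),
      (show ¬((i:ℕ) = 2*l - 2 - (n + 2*l - 2 - (j:ℕ)) ∧ (n ≤ n + 2*l - 2 - (j:ℕ) ∧ n + 2*l - 2 - (j:ℕ) < 2*l - 1)) by omega),
      (show ((i:ℕ) = n + 2*l - 2 - (j:ℕ) ∧ 2*l - 1 ≤ n + 2*l - 2 - (j:ℕ)) ↔ ((i:ℕ) = n + 2*l - 2 - (j:ℕ)) by omega),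
      (show ((i:ℕ) = n + 2*l - 2 - (n + 2*l - 2 - (j:ℕ)) ∧ 2*l - 1 ≤ n + 2*l - 2 - (j:ℕ)) ↔ ((i:ℕ) = (j:ℕ)) by omega), Fin.ext_iff, if_false, add_zero, zero_add]
    try split_ifs
    all_goals first | (exfalso; omega) | ring1 | (norm_num; done) | linear_combination (mul_inv_cancel₀ h2 : (2:k) * 2⁻¹ = 1)
  by_cases hC : (j:ℕ) < 2*l - 1
  · rw [dif_neg (show ¬(2*l - 2 - (j:ℕ) < 2*n ∧ (j:ℕ) < n) by omega),
      dif_neg (show ¬(n + 2*l - 2 - (j:ℕ) < 2*n ∧ (2*l - 1 - n ≤ (j:ℕ) ∧ (j:ℕ) < n)) by omega),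
      dif_pos (show (j:ℕ) - n < 2*n ∧ (n ≤ (j:ℕ) ∧ (j:ℕ) < 2*l - 1) by omega),
      dif_neg (show ¬((j:ℕ) - n < 2*n ∧ 2*l - 1 ≤ (j:ℕ)) by omega),
      dif_neg (show ¬((j:ℕ) < 2*n ∧ 2*l - 1 ≤ (j:ℕ)) by omega)]
    simp only [PM, Fin.val_mk]
    simp only [(show ((i:ℕ) = n + ((j:ℕ) - n) ∧ (j:ℕ) - n < n) ↔ ((i:ℕ) = (j:ℕ)) by omega),
      (show ¬((i:ℕ) = 2*l - 2 - ((j:ℕ) - n) ∧ (2*l - 1 - n ≤ (j:ℕ) - n ∧ (j:ℕ) - n < n)) by omega),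
      (show ¬((i:ℕ) = 2*l - 2 - ((j:ℕ) - n) ∧ (n ≤ (j:ℕ) - n ∧ (j:ℕ) - n < 2*l - 1)) by omega),
      (show ¬((i:ℕ) = (j:ℕ) - n ∧ 2*l - 1 ≤ (j:ℕ) - n) by omega),
      (show ¬((i:ℕ) = n + 2*l - 2 - ((j:ℕ) - n) ∧ 2*l - 1 ≤ (j:ℕ) - n) by omega), Fin.ext_iff, if_false, add_zero, zero_add]
    try split_ifs
    all_goals first | (exfalso; omega) | ring1 | (norm_num; done) | linear_combination (mul_inv_cancel₀ h2 : (2:k) * 2⁻¹ = 1)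
  rw [dif_neg (show ¬(2*l - 2 - (j:ℕ) < 2*n ∧ (j:ℕ) < n) by omega),
    dif_neg (show ¬(n + 2*l - 2 - (j:ℕ) < 2*n ∧ (2*l - 1 - n ≤ (j:ℕ) ∧ (j:ℕ) < n)) by omega),
    dif_neg (show ¬((j:ℕ) - n < 2*n ∧ (n ≤ (j:ℕ) ∧ (j:ℕ) < 2*l - 1)) by omega),
    dif_pos (show (j:ℕ) - n < 2*n ∧ 2*l - 1 ≤ (j:ℕ) by omega),
    dif_pos (show (j:ℕ) < 2*n ∧ 2*l - 1 ≤ (j:ℕ) by omega)]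
  simp only [PM, Fin.val_mk]
  simp only [(show ((i:ℕ) = n + ((j:ℕ) - n) ∧ (j:ℕ) - n < n) ↔ ((i:ℕ) = (j:ℕ)) by omega),
    (show ((i:ℕ) = 2*l - 2 - ((j:ℕ) - n) ∧ (2*l - 1 - n ≤ (j:ℕ) - n ∧ (j:ℕ) - n < n)) ↔ ((i:ℕ) = n + 2*l - 2 - (j:ℕ)) by omega),
    (show ¬((i:ℕ) = 2*l - 2 - ((j:ℕ) - n) ∧ (n ≤ (j:ℕ) - n ∧ (j:ℕ) - n < 2*l - 1)) by omega),
    (show ¬((i:ℕ) = (j:ℕ) - n ∧ 2*l - 1 ≤ (j:ℕ) - n) by omega),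
    (show ¬((i:ℕ) = n + 2*l - 2 - ((j:ℕ) - n) ∧ 2*l - 1 ≤ (j:ℕ) - n) by omega),
    (show ¬((i:ℕ) = n + ((j:ℕ)) ∧ (j:ℕ) < n) by omega),
    (show ¬((i:ℕ) = 2*l - 2 - ((j:ℕ)) ∧ (2*l - 1 - n ≤ (j:ℕ) ∧ (j:ℕ) < n)) by omega),
    (show ¬((i:ℕ) = 2*l - 2 - ((j:ℕ)) ∧ (n ≤ (j:ℕ) ∧ (j:ℕ) < 2*l - 1)) by omega),
    (show ((i:ℕ) = (j:ℕ) ∧ 2*l - 1 ≤ (j:ℕ)) ↔ ((i:ℕ) = (j:ℕ)) by omega),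
    (show ((i:ℕ) = n + 2*l - 2 - ((j:ℕ)) ∧ 2*l - 1 ≤ (j:ℕ)) ↔ ((i:ℕ) = n + 2*l - 2 - (j:ℕ)) by omega), Fin.ext_iff, if_false, add_zero, zero_add]
  try split_ifs
  all_goals first | (exfalso; omega) | ring1 | (norm_num; done) | linear_combination (mul_inv_cancel₀ h2 : (2:k) * 2⁻¹ = 1)

private lemma EP_PJ : EM k n l * PM k n l = PM k n l * JmM k n l 1 := by
  ext i c
  rw [mul_apply, mul_apply]
  simp only [PM, JmM, mul_add, Finset.sum_add_distrib, sum_mul_ite_nat]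
  have hi := i.2; have hc := c.2
  by_cases hA : (c:ℕ) < 2*l - 1 - n
  · rw [dif_pos (show n + (c:ℕ) < 2*n ∧ (c:ℕ) < n by omega),
      dif_neg (show ¬(2*l - 2 - (c:ℕ) < 2*n ∧ (2*l - 1 - n ≤ (c:ℕ) ∧ (c:ℕ) < n)) by omega),
      dif_neg (show ¬(2*l - 2 - (c:ℕ) < 2*n ∧ (n ≤ (c:ℕ) ∧ (c:ℕ) < 2*l - 1)) by omega),
      dif_neg (show ¬((c:ℕ) < 2*n ∧ 2*l - 1 ≤ (c:ℕ)) by omega),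
      dif_neg (show ¬(n + 2*l - 2 - (c:ℕ) < 2*n ∧ 2*l - 1 ≤ (c:ℕ)) by omega),
      dif_pos (show (c:ℕ) + 1 < 2*n ∧ ((c:ℕ) + 1 < 2*l - 1 ∨ (2*l - 1 ≤ (c:ℕ) ∧ (c:ℕ) + 1 < 2*n)) by omega)]
    simp only [EM, Fin.val_mk]
    simp only [(show ¬(n + (c:ℕ) = (i:ℕ) + 1 ∧ (i:ℕ) + 1 < n) by omega),
      (show ((i:ℕ) = n + (c:ℕ) + 1 ∧ (n ≤ n + (c:ℕ) ∧ n + (c:ℕ) + 1 < 2*n)) ↔ ((i:ℕ) = n + (c:ℕ) + 1) by omega),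
      (show ((i:ℕ) = n - 1 ∧ n + (c:ℕ) = 2*l - 2) ↔ ((i:ℕ) = n - 1 ∧ (c:ℕ) = 2*l - n - 2) by omega),
      (show ¬((i:ℕ) = 2*l - n - 2 ∧ n + (c:ℕ) = 2*n - 1) by omega),
      (show ((i:ℕ) = n + ((c:ℕ) + 1) ∧ (c:ℕ) + 1 < n) ↔ ((i:ℕ) = n + (c:ℕ) + 1) by omega),
      (show ((i:ℕ) = 2*l - 2 - ((c:ℕ) + 1) ∧ (2*l - 1 - n ≤ (c:ℕ) + 1 ∧ (c:ℕ) + 1 < n)) ↔ ((i:ℕ) = n - 1 ∧ (c:ℕ) = 2*l - n - 2) by omega),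
      (show ¬((i:ℕ) = 2*l - 2 - ((c:ℕ) + 1) ∧ (n ≤ (c:ℕ) + 1 ∧ (c:ℕ) + 1 < 2*l - 1)) by omega),
      (show ¬((i:ℕ) = (c:ℕ) + 1 ∧ 2*l - 1 ≤ (c:ℕ) + 1) by omega),
      (show ¬((i:ℕ) = n + 2*l - 2 - ((c:ℕ) + 1) ∧ 2*l - 1 ≤ (c:ℕ) + 1) by omega), if_false, add_zero, zero_add]
    try split_ifs
    all_goals first | (exfalso; omega) | ring1 | (norm_num; done)
  by_cases hB : (c:ℕ) < n - 1
  · rw [dif_pos (show n + (c:ℕ) < 2*n ∧ (c:ℕ) < n by omega),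
      dif_pos (show 2*l - 2 - (c:ℕ) < 2*n ∧ (2*l - 1 - n ≤ (c:ℕ) ∧ (c:ℕ) < n) by omega),
      dif_neg (show ¬(2*l - 2 - (c:ℕ) < 2*n ∧ (n ≤ (c:ℕ) ∧ (c:ℕ) < 2*l - 1)) by omega),
      dif_neg (show ¬((c:ℕ) < 2*n ∧ 2*l - 1 ≤ (c:ℕ)) by omega),
      dif_neg (show ¬(n + 2*l - 2 - (c:ℕ) < 2*n ∧ 2*l - 1 ≤ (c:ℕ)) by omega),
      dif_pos (show (c:ℕ) + 1 < 2*n ∧ ((c:ℕ) + 1 < 2*l - 1 ∨ (2*l - 1 ≤ (c:ℕ) ∧ (c:ℕ) + 1 < 2*n)) by omega)]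
    simp only [EM, Fin.val_mk]
    simp only [(show ¬(n + (c:ℕ) = (i:ℕ) + 1 ∧ (i:ℕ) + 1 < n) by omega),
      (show ((i:ℕ) = n + (c:ℕ) + 1 ∧ (n ≤ n + (c:ℕ) ∧ n + (c:ℕ) + 1 < 2*n)) ↔ ((i:ℕ) = n + (c:ℕ) + 1) by omega),
      (show ¬((i:ℕ) = n - 1 ∧ n + (c:ℕ) = 2*l - 2) by omega),
      (show ¬((i:ℕ) = 2*l - n - 2 ∧ n + (c:ℕ) = 2*n - 1) by omega),
      (show (2*l - 2 - (c:ℕ) = (i:ℕ) + 1 ∧ (i:ℕ) + 1 < n) ↔ ((i:ℕ) + 1 = 2*l - 2 - (c:ℕ)) by omega),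
      (show ¬((i:ℕ) = 2*l - 2 - (c:ℕ) + 1 ∧ (n ≤ 2*l - 2 - (c:ℕ) ∧ 2*l - 2 - (c:ℕ) + 1 < 2*n)) by omega),
      (show ¬((i:ℕ) = n - 1 ∧ 2*l - 2 - (c:ℕ) = 2*l - 2) by omega),
      (show ¬((i:ℕ) = 2*l - n - 2 ∧ 2*l - 2 - (c:ℕ) = 2*n - 1) by omega),
      (show ((i:ℕ) = n + ((c:ℕ) + 1) ∧ (c:ℕ) + 1 < n) ↔ ((i:ℕ) = n + (c:ℕ) + 1) by omega),
      (show ((i:ℕ) = 2*l - 2 - ((c:ℕ) + 1) ∧ (2*l - 1 - n ≤ (c:ℕ) + 1 ∧ (c:ℕ) + 1 < n)) ↔ ((i:ℕ) + 1 = 2*l - 2 - (c:ℕ)) by omega),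
      (show ¬((i:ℕ) = 2*l - 2 - ((c:ℕ) + 1) ∧ (n ≤ (c:ℕ) + 1 ∧ (c:ℕ) + 1 < 2*l - 1)) by omega),
      (show ¬((i:ℕ) = (c:ℕ) + 1 ∧ 2*l - 1 ≤ (c:ℕ) + 1) by omega),
      (show ¬((i:ℕ) = n + 2*l - 2 - ((c:ℕ) + 1) ∧ 2*l - 1 ≤ (c:ℕ) + 1) by omega), if_false, add_zero, zero_add]
    try split_ifs
    all_goals first | (exfalso; omega) | ring1 | (norm_num; done)
  by_cases hB2 : (c:ℕ) = n - 1
  · rw [dif_pos (show n + (c:ℕ) < 2*n ∧ (c:ℕ) < n by omega),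
      dif_pos (show 2*l - 2 - (c:ℕ) < 2*n ∧ (2*l - 1 - n ≤ (c:ℕ) ∧ (c:ℕ) < n) by omega),
      dif_neg (show ¬(2*l - 2 - (c:ℕ) < 2*n ∧ (n ≤ (c:ℕ) ∧ (c:ℕ) < 2*l - 1)) by omega),
      dif_neg (show ¬((c:ℕ) < 2*n ∧ 2*l - 1 ≤ (c:ℕ)) by omega),
      dif_neg (show ¬(n + 2*l - 2 - (c:ℕ) < 2*n ∧ 2*l - 1 ≤ (c:ℕ)) by omega),
      dif_pos (show (c:ℕ) + 1 < 2*n ∧ ((c:ℕ) + 1 < 2*l - 1 ∨ (2*l - 1 ≤ (c:ℕ) ∧ (c:ℕ) + 1 < 2*n)) by omega)]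
    simp only [EM, Fin.val_mk]
    simp only [(show ¬(n + (c:ℕ) = (i:ℕ) + 1 ∧ (i:ℕ) + 1 < n) by omega),
      (show ¬((i:ℕ) = n + (c:ℕ) + 1 ∧ (n ≤ n + (c:ℕ) ∧ n + (c:ℕ) + 1 < 2*n)) by omega),
      (show ¬((i:ℕ) = n - 1 ∧ n + (c:ℕ) = 2*l - 2) by omega),
      (show ((i:ℕ) = 2*l - n - 2 ∧ n + (c:ℕ) = 2*n - 1) ↔ ((i:ℕ) = 2*l - n - 2) by omega),
      (show (2*l - 2 - (c:ℕ) = (i:ℕ) + 1 ∧ (i:ℕ) + 1 < n) ↔ ((i:ℕ) = 2*l - n - 2) by omega),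
      (show ¬((i:ℕ) = 2*l - 2 - (c:ℕ) + 1 ∧ (n ≤ 2*l - 2 - (c:ℕ) ∧ 2*l - 2 - (c:ℕ) + 1 < 2*n)) by omega),
      (show ¬((i:ℕ) = n - 1 ∧ 2*l - 2 - (c:ℕ) = 2*l - 2) by omega),
      (show ¬((i:ℕ) = 2*l - n - 2 ∧ 2*l - 2 - (c:ℕ) = 2*n - 1) by omega),
      (show ¬((i:ℕ) = n + ((c:ℕ) + 1) ∧ (c:ℕ) + 1 < n) by omega),
      (show ¬((i:ℕ) = 2*l - 2 - ((c:ℕ) + 1) ∧ (2*l - 1 - n ≤ (c:ℕ) + 1 ∧ (c:ℕ) + 1 < n)) by omega),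
      (show ((i:ℕ) = 2*l - 2 - ((c:ℕ) + 1) ∧ (n ≤ (c:ℕ) + 1 ∧ (c:ℕ) + 1 < 2*l - 1)) ↔ ((i:ℕ) = 2*l - n - 2) by omega),
      (show ¬((i:ℕ) = (c:ℕ) + 1 ∧ 2*l - 1 ≤ (c:ℕ) + 1) by omega),
      (show ¬((i:ℕ) = n + 2*l - 2 - ((c:ℕ) + 1) ∧ 2*l - 1 ≤ (c:ℕ) + 1) by omega), if_false, add_zero, zero_add]
    try split_ifs
    all_goals first | (exfalso; omega) | ring1 | (norm_num; done)
  by_cases hC : (c:ℕ) < 2*l - 2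
  · rw [dif_neg (show ¬(n + (c:ℕ) < 2*n ∧ (c:ℕ) < n) by omega),
      dif_neg (show ¬(2*l - 2 - (c:ℕ) < 2*n ∧ (2*l - 1 - n ≤ (c:ℕ) ∧ (c:ℕ) < n)) by omega),
      dif_pos (show 2*l - 2 - (c:ℕ) < 2*n ∧ (n ≤ (c:ℕ) ∧ (c:ℕ) < 2*l - 1) by omega),
      dif_neg (show ¬((c:ℕ) < 2*n ∧ 2*l - 1 ≤ (c:ℕ)) by omega),
      dif_neg (show ¬(n + 2*l - 2 - (c:ℕ) < 2*n ∧ 2*l - 1 ≤ (c:ℕ)) by omega),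
      dif_pos (show (c:ℕ) + 1 < 2*n ∧ ((c:ℕ) + 1 < 2*l - 1 ∨ (2*l - 1 ≤ (c:ℕ) ∧ (c:ℕ) + 1 < 2*n)) by omega)]
    simp only [EM, Fin.val_mk]
    simp only [(show (2*l - 2 - (c:ℕ) = (i:ℕ) + 1 ∧ (i:ℕ) + 1 < n) ↔ ((i:ℕ) + 1 = 2*l - 2 - (c:ℕ)) by omega),
      (show ¬((i:ℕ) = 2*l - 2 - (c:ℕ) + 1 ∧ (n ≤ 2*l - 2 - (c:ℕ) ∧ 2*l - 2 - (c:ℕ) + 1 < 2*n)) by omega),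
      (show ¬((i:ℕ) = n - 1 ∧ 2*l - 2 - (c:ℕ) = 2*l - 2) by omega),
      (show ¬((i:ℕ) = 2*l - n - 2 ∧ 2*l - 2 - (c:ℕ) = 2*n - 1) by omega),
      (show ¬((i:ℕ) = n + ((c:ℕ) + 1) ∧ (c:ℕ) + 1 < n) by omega),
      (show ¬((i:ℕ) = 2*l - 2 - ((c:ℕ) + 1) ∧ (2*l - 1 - n ≤ (c:ℕ) + 1 ∧ (c:ℕ) + 1 < n)) by omega),
      (show ((i:ℕ) = 2*l - 2 - ((c:ℕ) + 1) ∧ (n ≤ (c:ℕ) + 1 ∧ (c:ℕ) + 1 < 2*l - 1)) ↔ ((i:ℕ) + 1 = 2*l - 2 - (c:ℕ)) by omega),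
      (show ¬((i:ℕ) = (c:ℕ) + 1 ∧ 2*l - 1 ≤ (c:ℕ) + 1) by omega),
      (show ¬((i:ℕ) = n + 2*l - 2 - ((c:ℕ) + 1) ∧ 2*l - 1 ≤ (c:ℕ) + 1) by omega), if_false, add_zero, zero_add]
    try split_ifs
    all_goals first | (exfalso; omega) | ring1 | (norm_num; done)
  by_cases hD : (c:ℕ) = 2*l - 2
  · rw [dif_neg (show ¬(n + (c:ℕ) < 2*n ∧ (c:ℕ) < n) by omega),
      dif_neg (show ¬(2*l - 2 - (c:ℕ) < 2*n ∧ (2*l - 1 - n ≤ (c:ℕ) ∧ (c:ℕ) < n)) by omega),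
      dif_pos (show 2*l - 2 - (c:ℕ) < 2*n ∧ (n ≤ (c:ℕ) ∧ (c:ℕ) < 2*l - 1) by omega),
      dif_neg (show ¬((c:ℕ) < 2*n ∧ 2*l - 1 ≤ (c:ℕ)) by omega),
      dif_neg (show ¬(n + 2*l - 2 - (c:ℕ) < 2*n ∧ 2*l - 1 ≤ (c:ℕ)) by omega),
      dif_neg (show ¬((c:ℕ) + 1 < 2*n ∧ ((c:ℕ) + 1 < 2*l - 1 ∨ (2*l - 1 ≤ (c:ℕ) ∧ (c:ℕ) + 1 < 2*n))) by omega)]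
    simp only [EM, Fin.val_mk]
    simp only [(show ¬(2*l - 2 - (c:ℕ) = (i:ℕ) + 1 ∧ (i:ℕ) + 1 < n) by omega),
      (show ¬((i:ℕ) = 2*l - 2 - (c:ℕ) + 1 ∧ (n ≤ 2*l - 2 - (c:ℕ) ∧ 2*l - 2 - (c:ℕ) + 1 < 2*n)) by omega),
      (show ¬((i:ℕ) = n - 1 ∧ 2*l - 2 - (c:ℕ) = 2*l - 2) by omega),
      (show ¬((i:ℕ) = 2*l - n - 2 ∧ 2*l - 2 - (c:ℕ) = 2*n - 1) by omega), if_false, add_zero, zero_add]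
    try split_ifs
    all_goals first | (exfalso; omega) | ring1 | (norm_num; done)
  by_cases hE : (c:ℕ) < 2*n - 1
  · rw [dif_neg (show ¬(n + (c:ℕ) < 2*n ∧ (c:ℕ) < n) by omega),
      dif_neg (show ¬(2*l - 2 - (c:ℕ) < 2*n ∧ (2*l - 1 - n ≤ (c:ℕ) ∧ (c:ℕ) < n)) by omega),
      dif_neg (show ¬(2*l - 2 - (c:ℕ) < 2*n ∧ (n ≤ (c:ℕ) ∧ (c:ℕ) < 2*l - 1)) by omega),
      dif_pos (show (c:ℕ) < 2*n ∧ 2*l - 1 ≤ (c:ℕ) by omega),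
      dif_pos (show n + 2*l - 2 - (c:ℕ) < 2*n ∧ 2*l - 1 ≤ (c:ℕ) by omega),
      dif_pos (show (c:ℕ) + 1 < 2*n ∧ ((c:ℕ) + 1 < 2*l - 1 ∨ (2*l - 1 ≤ (c:ℕ) ∧ (c:ℕ) + 1 < 2*n)) by omega)]
    simp only [EM, Fin.val_mk]
    simp only [(show ¬((c:ℕ) = (i:ℕ) + 1 ∧ (i:ℕ) + 1 < n) by omega),
      (show ((i:ℕ) = (c:ℕ) + 1 ∧ (n ≤ (c:ℕ) ∧ (c:ℕ) + 1 < 2*n)) ↔ ((i:ℕ) = (c:ℕ) + 1) by omega),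
      (show ¬((i:ℕ) = n - 1 ∧ (c:ℕ) = 2*l - 2) by omega),
      (show ¬((i:ℕ) = 2*l - n - 2 ∧ (c:ℕ) = 2*n - 1) by omega),
      (show (n + 2*l - 2 - (c:ℕ) = (i:ℕ) + 1 ∧ (i:ℕ) + 1 < n) ↔ ((i:ℕ) + 1 = n + 2*l - 2 - (c:ℕ)) by omega),
      (show ¬((i:ℕ) = n + 2*l - 2 - (c:ℕ) + 1 ∧ (n ≤ n + 2*l - 2 - (c:ℕ) ∧ n + 2*l - 2 - (c:ℕ) + 1 < 2*n)) by omega),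
      (show ¬((i:ℕ) = n - 1 ∧ n + 2*l - 2 - (c:ℕ) = 2*l - 2) by omega),
      (show ¬((i:ℕ) = 2*l - n - 2 ∧ n + 2*l - 2 - (c:ℕ) = 2*n - 1) by omega),
      (show ¬((i:ℕ) = n + ((c:ℕ) + 1) ∧ (c:ℕ) + 1 < n) by omega),
      (show ¬((i:ℕ) = 2*l - 2 - ((c:ℕ) + 1) ∧ (2*l - 1 - n ≤ (c:ℕ) + 1 ∧ (c:ℕ) + 1 < n)) by omega),
      (show ¬((i:ℕ) = 2*l - 2 - ((c:ℕ) + 1) ∧ (n ≤ (c:ℕ) + 1 ∧ (c:ℕ) + 1 < 2*l - 1)) by omega),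
      (show ((i:ℕ) = (c:ℕ) + 1 ∧ 2*l - 1 ≤ (c:ℕ) + 1) ↔ ((i:ℕ) = (c:ℕ) + 1) by omega),
      (show ((i:ℕ) = n + 2*l - 2 - ((c:ℕ) + 1) ∧ 2*l - 1 ≤ (c:ℕ) + 1) ↔ ((i:ℕ) + 1 = n + 2*l - 2 - (c:ℕ)) by omega), if_false, add_zero, zero_add]
    try split_ifs
    all_goals first | (exfalso; omega) | ring1 | (norm_num; done)
  rw [dif_neg (show ¬(n + (c:ℕ) < 2*n ∧ (c:ℕ) < n) by omega),
    dif_neg (show ¬(2*l - 2 - (c:ℕ) < 2*n ∧ (2*l - 1 - n ≤ (c:ℕ) ∧ (c:ℕ) < n)) by omega),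
    dif_neg (show ¬(2*l - 2 - (c:ℕ) < 2*n ∧ (n ≤ (c:ℕ) ∧ (c:ℕ) < 2*l - 1)) by omega),
    dif_pos (show (c:ℕ) < 2*n ∧ 2*l - 1 ≤ (c:ℕ) by omega),
    dif_pos (show n + 2*l - 2 - (c:ℕ) < 2*n ∧ 2*l - 1 ≤ (c:ℕ) by omega),
    dif_neg (show ¬((c:ℕ) + 1 < 2*n ∧ ((c:ℕ) + 1 < 2*l - 1 ∨ (2*l - 1 ≤ (c:ℕ) ∧ (c:ℕ) + 1 < 2*n))) by omega)]
  simp only [EM, Fin.val_mk]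
  simp only [(show ¬((c:ℕ) = (i:ℕ) + 1 ∧ (i:ℕ) + 1 < n) by omega),
    (show ¬((i:ℕ) = (c:ℕ) + 1 ∧ (n ≤ (c:ℕ) ∧ (c:ℕ) + 1 < 2*n)) by omega),
    (show ¬((i:ℕ) = n - 1 ∧ (c:ℕ) = 2*l - 2) by omega),
    (show ((i:ℕ) = 2*l - n - 2 ∧ (c:ℕ) = 2*n - 1) ↔ ((i:ℕ) = 2*l - n - 2) by omega),
    (show (n + 2*l - 2 - (c:ℕ) = (i:ℕ) + 1 ∧ (i:ℕ) + 1 < n) ↔ ((i:ℕ) = 2*l - n - 2) by omega),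
    (show ¬((i:ℕ) = n + 2*l - 2 - (c:ℕ) + 1 ∧ (n ≤ n + 2*l - 2 - (c:ℕ) ∧ n + 2*l - 2 - (c:ℕ) + 1 < 2*n)) by omega),
    (show ¬((i:ℕ) = n - 1 ∧ n + 2*l - 2 - (c:ℕ) = 2*l - 2) by omega),
    (show ¬((i:ℕ) = 2*l - n - 2 ∧ n + 2*l - 2 - (c:ℕ) = 2*n - 1) by omega), if_false, add_zero, zero_add]
  try split_ifs
  all_goals first | (exfalso; omega) | ring1 | (norm_num; done)

private lemma e_eq :
    (single (⟨2*l-n-2, by clear hn; omega⟩ : Fin (2*n)) (⟨2*n-1, by clear hn; omega⟩ : Fin (2*n)) (1:k) +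
      single (⟨n-1, by clear hn; omega⟩ : Fin (2*n)) (⟨2*l-2, lt_of_le_of_lt (b := 2*n-1) (by clear hn; omega) (by clear hn; omega)⟩ : Fin (2*n)) 1 +
      ∑ i : Fin (n-1),
        (single (⟨i.1, by clear hn; have := i.2; omega⟩ : Fin (2*n)) (⟨i.1+1, by clear hn; have := i.2; omega⟩ : Fin (2*n)) 1 +
         single (⟨n+i.1+1, by clear hn; have := i.2; omega⟩ : Fin (2*n)) (⟨n+i.1, by clear hn; have := i.2; omega⟩ : Fin (2*n)) 1)) = EM k n l := by
  ext a b
  have ha := a.2; have hb := b.2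
  rw [Matrix.add_apply, Matrix.add_apply, Matrix.sum_apply]
  have hS1 : (∑ t : Fin (n-1),
      ((single (⟨t.1, by clear hn; have := t.2; omega⟩ : Fin (2*n)) (⟨t.1+1, by clear hn; have := t.2; omega⟩ : Fin (2*n)) (1:k) +
        single (⟨n+t.1+1, by clear hn; have := t.2; omega⟩ : Fin (2*n)) (⟨n+t.1, by clear hn; have := t.2; omega⟩ : Fin (2*n)) 1 :
          Matrix (Fin (2*n)) (Fin (2*n)) k) a b)) =
      (if b.1 = a.1 + 1 ∧ a.1 + 1 < n then 1 else 0) +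
      (if a.1 = b.1 + 1 ∧ (n ≤ b.1 ∧ b.1 + 1 < 2*n) then 1 else 0) := by
    simp only [Matrix.add_apply, single, of_apply, Fin.ext_iff, Fin.val_mk]
    rw [Finset.sum_add_distrib]
    congr 1
    · by_cases h1 : b.1 = a.1 + 1 ∧ a.1 + 1 < n
      · rw [if_pos h1, Finset.sum_eq_single (⟨a.1, by omega⟩ : Fin (n-1))]
        · rw [Fin.val_mk, if_pos ⟨rfl, by omega⟩]
        · intro t _ ht
          rw [if_neg]
          rintro ⟨ht1, -⟩; exact ht (Fin.ext ht1)
        · simp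
      · rw [if_neg h1]
        refine Finset.sum_eq_zero fun t _ => ?_
        rw [if_neg]
        have := t.2
        rintro ⟨h3, h4⟩
        omega
    · by_cases h1 : a.1 = b.1 + 1 ∧ (n ≤ b.1 ∧ b.1 + 1 < 2*n)
      · rw [if_pos h1, Finset.sum_eq_single (⟨b.1 - n, by omega⟩ : Fin (n-1))]
        · rw [Fin.val_mk, if_pos ⟨by omega, by omega⟩]
        · intro t _ ht
          rw [if_neg]
          rintro ⟨-, ht2⟩
          exact ht (Fin.ext (by simp only [Fin.val_mk]; omega))
        · simp
      · rw [if_neg h1]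
        refine Finset.sum_eq_zero fun t _ => ?_
        rw [if_neg]
        have := t.2
        rintro ⟨h3, h4⟩
        omega
  rw [hS1]
  simp only [EM, single, of_apply, Fin.ext_iff, Fin.val_mk]
  split_ifs
  all_goals first | ring1 | (exfalso; omega)

end Aux

theorem stmt_6 (k : Type*) [Field k] (p : ℕ) [CharP k p] (hp : p ≠ 2)
    (n l : ℕ) (hn : 4 ≤ n) (hl1 : n + 1 < 2*l) (hl2 : l ≤ n) :
    let e : Matrix (Fin (2*n)) (Fin (2*n)) k :=
      single ⟨2*l-n-2, by omega⟩ ⟨2*n-1, by omega⟩ 1 +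
      single ⟨n-1, by omega⟩ ⟨2*l-2, by omega⟩ 1 +
      ∑ i : Fin (n-1),
        (single ⟨i.1, by have := i.2; omega⟩ ⟨i.1+1, by have := i.2; omega⟩ 1 +
         single ⟨n+i.1+1, by have := i.2; omega⟩ ⟨n+i.1, by have := i.2; omega⟩ 1)
    IsNilpotent e ∧
    ∀ m : ℕ, (e ^ m).rank = (2*l - 1 - m) + (2*n - 2*l + 1 - m) := by
  intro e
  have htwo : (2:k) ≠ 0 := Ring.two_ne_zero (by rw [ringChar.eq k p]; exact hp)
  have he : e = EM k n l := e_eq n l hn hl1 hl2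
  have hPQ : PM k n l * QM k n l = 1 := PQ n l hn hl1 hl2 htwo
  have hQP : QM k n l * PM k n l = 1 := mul_eq_one_comm.mp hPQ
  have heP : EM k n l = PM k n l * JmM k n l 1 * QM k n l := by
    rw [← EP_PJ n l hn hl1 hl2, Matrix.mul_assoc, hPQ, Matrix.mul_one]
  have key : ∀ m : ℕ, e ^ m = PM k n l * JmM k n l m * QM k n l := by
    intro m
    induction m with
    | zero => rw [pow_zero, JmM_zero n l hn hl1 hl2, Matrix.mul_one, hPQ]
    | succ m ih =>
        rw [pow_succ, ih, he, heP]
        rw [show PM k n l * JmM k n l m * QM k n l * (PM k n l * JmM k n l 1 * QM k n l)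
            = PM k n l * (JmM k n l m * (QM k n l * PM k n l) * JmM k n l 1) * QM k n l from by
          simp only [Matrix.mul_assoc]]
        rw [hQP, Matrix.mul_one, JmM_mul n l hn hl1 hl2]
  have hrank : ∀ m : ℕ, (e ^ m).rank = (JmM k n l m : Matrix (Fin (2*n)) (Fin (2*n)) k).rank := by
    intro m
    rw [key m]
    have hle1 : (PM k n l * JmM k n l m * QM k n l).rank
        ≤ (JmM k n l m : Matrix (Fin (2*n)) (Fin (2*n)) k).rank := by
      rw [Matrix.mul_assoc]
      refine le_trans (rank_mul_le_right _ _) ?_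
      exact rank_mul_le_left _ _
    have hle2 : (JmM k n l m : Matrix (Fin (2*n)) (Fin (2*n)) k).rank
        ≤ (PM k n l * JmM k n l m * QM k n l).rank := by
      have hid : (JmM k n l m : Matrix (Fin (2*n)) (Fin (2*n)) k)
          = QM k n l * (PM k n l * JmM k n l m * QM k n l) * PM k n l := by
        rw [show QM k n l * (PM k n l * JmM k n l m * QM k n l) * PM k n l
            = QM k n l * PM k n l * JmM k n l m * (QM k n l * PM k n l) from by
          simp only [Matrix.mul_assoc]]
        rw [hQP, Matrix.one_mul, Matrix.mul_one]
      conv_lhs => rw [hid]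
      rw [Matrix.mul_assoc]
      refine le_trans (rank_mul_le_right _ _) ?_
      exact rank_mul_le_left _ _
    exact le_antisymm hle1 hle2
  constructor
  · refine ⟨2*l - 1, ?_⟩
    rw [key (2*l-1), JmM_top n l hn hl1 hl2, Matrix.mul_zero, Matrix.zero_mul]
  · intro m
    rw [hrank m, rank_JmM n l hn hl1 hl2 m]
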